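/- Let n ∈ ℕ, λ ∈ ℂ with |arg λ| > απ/2 where α ∈ (0,1), and suppose |E_α(λ t^α)| ≤ m·min{t^{−α},1} and |t^{α−1}E_{α,α}(λ t^α)| ≤ m·min{t^{−α−1},t^{α−1}} for all t > 0. Define recursively u_n(t) = E_α(λ t^α) u_n^0 and, for i < n, u_i(t) = E_α(λ t^α) u_i^0 + ∫_0^t (t−s)^{α−1} E_{α,α}(λ(t−s)^α) u_{i+1}(s) ds. Then there exists C > 0 (depending on α, λ, n) such that |u_i(t)| ≤ C max_j |u_j^0| · min{t^{−α},1} for all t > 0 and all i. -/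

import Mathlib

open MeasureTheory Real

open intervalIntegral in
noncomputable def hfun (α t : ℝ) : ℝ := min (t ^ (-α)) 1
noncomputable def gfun (α t : ℝ) : ℝ := min (t ^ (-α - 1)) (t ^ (α - 1))
lemma hfun_nonneg (α : ℝ) {t : ℝ} (ht : 0 ≤ t) : 0 ≤ hfun α t :=
  le_min (Real.rpow_nonneg ht _) zero_le_one
lemma gfun_nonneg (α : ℝ) {t : ℝ} (ht : 0 ≤ t) : 0 ≤ gfun α t :=
  le_min (Real.rpow_nonneg ht _) (Real.rpow_nonneg ht _)
lemma hfun_meas (α : ℝ) : Measurable (hfun α) := by unfold hfun; fun_prop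
lemma gfun_meas (α : ℝ) : Measurable (gfun α) := by unfold gfun; fun_prop

lemma hfun_anti (α : ℝ) (h0 : 0 < α) {s t : ℝ} (hs : 0 < s) (hst : s ≤ t) :
    hfun α t ≤ hfun α s :=
  min_le_min (Real.rpow_le_rpow_of_nonpos hs hst (by linarith)) le_rfl

lemma gfun_anti (α : ℝ) (h0 : 0 < α) (h1 : α < 1) {s t : ℝ} (hs : 0 < s) (hst : s ≤ t) :
    gfun α t ≤ gfun α s :=
  min_le_min (Real.rpow_le_rpow_of_nonpos hs hst (by linarith))
    (Real.rpow_le_rpow_of_nonpos hs hst (by linarith))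

lemma hfun_intble (α : ℝ) {x : ℝ} (hx : 0 ≤ x) :
    IntervalIntegrable (hfun α) volume 0 x := by
  apply IntervalIntegrable.mono_fun (g := hfun α)
    (_root_.intervalIntegrable_const (c := (1:ℝ)))
    ((hfun_meas α).aestronglyMeasurable.restrict)
  filter_upwards [ae_restrict_mem measurableSet_uIoc] with s hs
  rw [Set.uIoc_of_le hx] at hs
  rw [Real.norm_eq_abs, abs_of_nonneg (hfun_nonneg α hs.1.le), norm_one]
  exact min_le_right _ _

lemma gfun_intble (α : ℝ) (h0 : 0 < α) {x : ℝ} (hx : 0 ≤ x) :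
    IntervalIntegrable (gfun α) volume 0 x := by
  apply IntervalIntegrable.mono_fun (g := gfun α)
    (intervalIntegral.intervalIntegrable_rpow' (a := 0) (b := x)
      (r := α - 1) (by linarith))
    ((gfun_meas α).aestronglyMeasurable.restrict)
  filter_upwards [ae_restrict_mem measurableSet_uIoc] with s hs
  rw [Set.uIoc_of_le hx] at hs
  have hs0 : 0 < s := hs.1
  rw [Real.norm_eq_abs, Real.norm_eq_abs, abs_of_nonneg (gfun_nonneg α hs0.le),
    abs_of_nonneg (Real.rpow_nonneg hs0.le _)]
  exact min_le_right _ _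

lemma ghfun_intble (α : ℝ) (h0 : 0 < α) {t : ℝ} (ht : 0 ≤ t) :
    IntervalIntegrable (fun s => gfun α (t - s) * hfun α s) volume 0 t := by
  have hdom : IntervalIntegrable (fun s => (t - s) ^ (α - 1)) volume 0 t := by
    have := (intervalIntegral.intervalIntegrable_rpow' (a := 0) (b := t)
      (r := α - 1) (by linarith)).comp_sub_left t
    simpa using this.symm
  apply IntervalIntegrable.mono_fun hdom
  · exact (((gfun_meas α).comp (measurable_const.sub measurable_id)).mul
      (hfun_meas α)).aestronglyMeasurable.restrict
  filter_upwards [ae_restrict_mem measurableSet_uIoc] with s hs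
  rw [Set.uIoc_of_le ht] at hs
  have h1 : 0 ≤ t - s := by linarith [hs.2]
  have h2 : 0 ≤ s := hs.1.le
  rw [Real.norm_eq_abs, Real.norm_eq_abs,
    abs_of_nonneg (mul_nonneg (gfun_nonneg α h1) (hfun_nonneg α h2)),
    abs_of_nonneg (Real.rpow_nonneg h1 _)]
  calc gfun α (t - s) * hfun α s ≤ (t-s) ^ (α-1) * 1 :=
        mul_le_mul (min_le_right _ _) (min_le_right _ _) (hfun_nonneg α h2)
          (Real.rpow_nonneg h1 _)
    _ = (t-s) ^ (α-1) := mul_one _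

lemma integral_gfun_le (α : ℝ) (h0 : 0 < α) (h1 : α < 1) {x : ℝ} (hx : 0 ≤ x) :
    ∫ s in (0:ℝ)..x, gfun α s ≤ 2 / α := by
  have hαne : α - 1 + 1 = α := by ring
  have base : ∀ y : ℝ, 0 ≤ y → y ≤ 1 → ∫ s in (0:ℝ)..y, gfun α s ≤ 1 / α := by
    intro y hy hy1
    calc ∫ s in (0:ℝ)..y, gfun α s ≤ ∫ s in (0:ℝ)..y, s ^ (α - 1) := by
          apply intervalIntegral.integral_mono_on hy (gfun_intble α h0 hy)
            (intervalIntegral.intervalIntegrable_rpow' (by linarith))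
          intro s hs; exact min_le_right _ _
      _ = (y ^ (α-1+1) - 0 ^ (α-1+1)) / (α-1+1) := integral_rpow (Or.inl (by linarith))
      _ = y ^ α / α := by rw [hαne, Real.zero_rpow (ne_of_gt h0)]; ring
      _ ≤ 1 / α := by
          gcongr
          exact Real.rpow_le_one hy hy1 h0.le
  rcases le_or_gt x 1 with hx1 | hx1
  · exact (base x hx hx1).trans (by rw [div_le_div_iff₀ h0 h0]; nlinarith)
  · have hsplit : (∫ s in (0:ℝ)..1, gfun α s) + ∫ s in (1:ℝ)..x, gfun α s
        = ∫ s in (0:ℝ)..x, gfun α s :=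
      intervalIntegral.integral_add_adjacent_intervals
        ((gfun_intble α h0 hx).mono_set (by rw [Set.uIcc_of_le hx, Set.uIcc_of_le (by norm_num : (0:ℝ) ≤ 1)]; exact Set.Icc_subset_Icc le_rfl hx1.le))
        ((gfun_intble α h0 hx).mono_set (by rw [Set.uIcc_of_le hx, Set.uIcc_of_le hx1.le]; exact Set.Icc_subset_Icc (by norm_num) le_rfl))
    rw [← hsplit]
    have hI1 : ∫ s in (0:ℝ)..1, gfun α s ≤ 1 / α := base 1 zero_le_one le_rfl
    have hI2 : ∫ s in (1:ℝ)..x, gfun α s ≤ 1 / α := by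
      calc ∫ s in (1:ℝ)..x, gfun α s ≤ ∫ s in (1:ℝ)..x, s ^ (-α - 1) := by
            apply intervalIntegral.integral_mono_on hx1.le
              ((gfun_intble α h0 hx).mono_set (by rw [Set.uIcc_of_le hx, Set.uIcc_of_le hx1.le]; exact Set.Icc_subset_Icc (by norm_num) le_rfl))
              (intervalIntegral.intervalIntegrable_rpow
                (Or.inr (by rw [Set.uIcc_of_le hx1.le]; intro h; exact absurd h.1 (by norm_num))))
            intro s hs; exact min_le_left _ _
        _ = (x ^ (-α-1+1) - 1 ^ (-α-1+1)) / (-α-1+1) := integral_rpow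
            (Or.inr ⟨by intro h; linarith [h], by rw [Set.uIcc_of_le hx1.le]; intro h; exact absurd h.1 (by norm_num)⟩)
        _ = (1 - x ^ (-α)) / α := by
            rw [Real.one_rpow]; have : -α - 1 + 1 = -α := by ring
            rw [this]; ring
        _ ≤ 1 / α := by
            gcongr
            nlinarith [Real.rpow_nonneg (le_trans zero_le_one hx1.le) (-α)]
    have h2 : 1/α + 1/α = 2/α := by ring
    linarith

lemma integral_hfun_le_self (α : ℝ) {x : ℝ} (hx : 0 ≤ x) :
    ∫ s in (0:ℝ)..x, hfun α s ≤ x := by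
  calc ∫ s in (0:ℝ)..x, hfun α s ≤ ∫ _ in (0:ℝ)..x, (1:ℝ) :=
        intervalIntegral.integral_mono_on hx (hfun_intble α hx)
          intervalIntegrable_const (fun s _ => min_le_right _ _)
    _ = x := by simp

lemma integral_hfun_le (α : ℝ) (h0 : 0 < α) (h1 : α < 1) {x : ℝ} (hx : 1 ≤ x) :
    ∫ s in (0:ℝ)..x, hfun α s ≤ 1 + x ^ (1 - α) / (1 - α) := by
  have hx0 : (0:ℝ) ≤ x := le_trans zero_le_one hx
  have hsplit : (∫ s in (0:ℝ)..1, hfun α s) + ∫ s in (1:ℝ)..x, hfun α s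
      = ∫ s in (0:ℝ)..x, hfun α s :=
    intervalIntegral.integral_add_adjacent_intervals
      ((hfun_intble α hx0).mono_set (by rw [Set.uIcc_of_le hx0, Set.uIcc_of_le (by norm_num : (0:ℝ) ≤ 1)]; exact Set.Icc_subset_Icc le_rfl hx))
      ((hfun_intble α hx0).mono_set (by rw [Set.uIcc_of_le hx0, Set.uIcc_of_le hx]; exact Set.Icc_subset_Icc (by norm_num) le_rfl))
  rw [← hsplit]
  have hI1 : ∫ s in (0:ℝ)..1, hfun α s ≤ 1 := by
    simpa using integral_hfun_le_self α zero_le_one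
  have hI2 : ∫ s in (1:ℝ)..x, hfun α s ≤ x ^ (1 - α) / (1 - α) := by
    calc ∫ s in (1:ℝ)..x, hfun α s ≤ ∫ s in (1:ℝ)..x, s ^ (-α) := by
          apply intervalIntegral.integral_mono_on hx
            ((hfun_intble α hx0).mono_set (by rw [Set.uIcc_of_le hx0, Set.uIcc_of_le hx]; exact Set.Icc_subset_Icc (by norm_num) le_rfl))
            (intervalIntegral.intervalIntegrable_rpow' (by linarith))
          intro s hs; exact min_le_left _ _
      _ = (x ^ (-α+1) - 1 ^ (-α+1)) / (-α+1) := integral_rpow (Or.inl (by linarith))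
      _ = (x ^ (1-α) - 1) / (1 - α) := by rw [Real.one_rpow]; ring_nf
      _ ≤ x ^ (1 - α) / (1 - α) := by gcongr <;> linarith
  linarith

lemma hfun_half (α : ℝ) (h0 : 0 < α) {t : ℝ} (ht : 0 < t) :
    hfun α (t / 2) ≤ 2 ^ α * hfun α t := by
  have key : (t / 2) ^ (-α) = 2 ^ α * t ^ (-α) := by
    rw [Real.div_rpow ht.le (by norm_num), Real.rpow_neg (by norm_num : (0:ℝ) ≤ 2)]
    field_simp
  unfold hfun
  rw [key]
  have h2 : (1:ℝ) ≤ 2 ^ α := Real.one_le_rpow (by norm_num) h0.le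
  rcases le_total (t ^ (-α)) 1 with h | h
  · rw [min_eq_left h]; exact min_le_left _ _
  · rw [min_eq_right h]; exact le_trans (min_le_right _ _) (by linarith)

lemma conv_bound (α : ℝ) (h0 : 0 < α) (h1 : α < 1) {t : ℝ} (ht : 0 < t) :
    ∫ s in (0:ℝ)..t, gfun α (t - s) * hfun α s
      ≤ ((1 + 1/(1-α)) * 2 ^ α + 2/α * 2 ^ α) * hfun α t := by
  set r := t / 2 with hr_def
  have hr : 0 < r := by positivity
  have hrt : r ≤ t := by simp only [hr_def]; linarith
  have htr : t - r = r := by simp only [hr_def]; ring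
  have hsub1 : Set.uIcc (0:ℝ) r ⊆ Set.uIcc (0:ℝ) t := by
    rw [Set.uIcc_of_le hr.le, Set.uIcc_of_le ht.le]; exact Set.Icc_subset_Icc le_rfl hrt
  have hsub2 : Set.uIcc r t ⊆ Set.uIcc (0:ℝ) t := by
    rw [Set.uIcc_of_le hrt, Set.uIcc_of_le ht.le]; exact Set.Icc_subset_Icc hr.le le_rfl
  have hsplit : (∫ s in (0:ℝ)..r, gfun α (t - s) * hfun α s)
      + (∫ s in r..t, gfun α (t - s) * hfun α s)
      = ∫ s in (0:ℝ)..t, gfun α (t - s) * hfun α s :=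
    intervalIntegral.integral_add_adjacent_intervals
      ((ghfun_intble α h0 ht.le).mono_set hsub1)
      ((ghfun_intble α h0 ht.le).mono_set hsub2)
  rw [← hsplit]
  -- second piece
  have hgcomp : IntervalIntegrable (fun s => gfun α (t - s)) volume r t := by
    have := (gfun_intble α h0 hr.le).comp_sub_left t
    simp only [sub_zero, htr] at this
    exact this.symm
  have hS2 : (∫ s in r..t, gfun α (t - s) * hfun α s) ≤ 2/α * 2 ^ α * hfun α t := by
    calc (∫ s in r..t, gfun α (t - s) * hfun α s)
        ≤ ∫ s in r..t, gfun α (t - s) * hfun α r := by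
          apply intervalIntegral.integral_mono_on hrt
            ((ghfun_intble α h0 ht.le).mono_set hsub2) (hgcomp.mul_const _)
          intro s hs
          exact mul_le_mul_of_nonneg_left (hfun_anti α h0 hr hs.1)
            (gfun_nonneg α (by linarith [hs.2]))
      _ = (∫ s in r..t, gfun α (t - s)) * hfun α r := by
          rw [intervalIntegral.integral_mul_const]
      _ = (∫ s in (0:ℝ)..r, gfun α s) * hfun α r := by
          rw [intervalIntegral.integral_comp_sub_left (gfun α) t, sub_self, htr]
      _ ≤ (2/α) * (2 ^ α * hfun α t) := by
          apply mul_le_mul (integral_gfun_le α h0 h1 hr.le) (hfun_half α h0 ht)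
            (hfun_nonneg α hr.le) (by positivity)
      _ = 2/α * 2 ^ α * hfun α t := by ring
  -- first piece
  have hS1 : (∫ s in (0:ℝ)..r, gfun α (t - s) * hfun α s)
      ≤ (1 + 1/(1-α)) * 2 ^ α * hfun α t := by
    have step1 : (∫ s in (0:ℝ)..r, gfun α (t - s) * hfun α s)
        ≤ gfun α r * ∫ s in (0:ℝ)..r, hfun α s := by
      rw [← intervalIntegral.integral_const_mul]
      apply intervalIntegral.integral_mono_on hr.le
        ((ghfun_intble α h0 ht.le).mono_set hsub1) ((hfun_intble α hr.le).const_mul _)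
      intro s hs
      apply mul_le_mul_of_nonneg_right _ (hfun_nonneg α hs.1)
      exact gfun_anti α h0 h1 hr (by linarith [hs.2])
    have hint_nonneg : 0 ≤ ∫ s in (0:ℝ)..r, hfun α s := by
      apply intervalIntegral.integral_nonneg hr.le
      intro s hs; exact hfun_nonneg α hs.1
    rcases le_or_gt r 1 with hr1 | hr1
    · -- r ≤ 1, t ≤ 2
      have ht2 : t ≤ 2 := by simp only [hr_def] at hr1; linarith
      have b1 : gfun α r * (∫ s in (0:ℝ)..r, hfun α s) ≤ r ^ (α - 1) * r :=
        mul_le_mul (min_le_right _ _) (integral_hfun_le_self α hr.le) hint_nonneg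
          (Real.rpow_nonneg hr.le _)
      have b2 : r ^ (α - 1) * r = r ^ α := by
        rw [← Real.rpow_add_one (ne_of_gt hr)]; ring_nf
      have b3 : r ^ α ≤ 1 := Real.rpow_le_one hr.le hr1 h0.le
      have b4 : (1:ℝ) ≤ 2 ^ α * hfun α t := by
        have ha : (2:ℝ) ^ (-α) ≤ t ^ (-α) :=
          Real.rpow_le_rpow_of_nonpos ht ht2 (by linarith)
        have hb : (2:ℝ) ^ (-α) ≤ 1 :=
          Real.rpow_le_one_of_one_le_of_nonpos (by norm_num) (by linarith)
        have hc : (2:ℝ) ^ (-α) ≤ hfun α t := le_min ha hb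
        have hd : (2:ℝ) ^ α * 2 ^ (-α) = 1 := by
          rw [← Real.rpow_add (by norm_num : (0:ℝ) < 2)]; simp
        nlinarith [Real.rpow_pos_of_pos (by norm_num : (0:ℝ) < 2) α]
      have b5 : (1:ℝ) ≤ 1 + 1/(1-α) := by
        have h1a : 0 < 1 - α := by linarith
        have : 0 < 1/(1-α) := by positivity
        linarith
      have b6 : 0 ≤ 2 ^ α * hfun α t := by
        have := hfun_nonneg α ht.le; positivity
      calc (∫ s in (0:ℝ)..r, gfun α (t - s) * hfun α s)
          ≤ 1 := by linarith
        _ ≤ (1 + 1/(1-α)) * 2 ^ α * hfun α t := by nlinarith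
    · -- 1 ≤ r
      have hr1' : (1:ℝ) ≤ r := hr1.le
      have hA : gfun α r ≤ r ^ (-α - 1) := min_le_left _ _
      have hB : (∫ s in (0:ℝ)..r, hfun α s) ≤ 1 + r ^ (1-α)/(1-α) :=
        integral_hfun_le α h0 h1 hr1'
      have prod : gfun α r * (∫ s in (0:ℝ)..r, hfun α s)
          ≤ r ^ (-α-1) * (1 + r ^ (1-α)/(1-α)) :=
        mul_le_mul hA hB hint_nonneg (Real.rpow_nonneg hr.le _)
      have hmul : r ^ (-α-1) * r ^ (1-α) = r ^ (-(2*α)) := by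
        rw [← Real.rpow_add hr]; congr 1; ring
      have e1 : r ^ (-α-1) * (1 + r ^ (1-α)/(1-α))
          = r ^ (-α-1) + r ^ (-(2*α)) / (1-α) := by
        have h1a : (1:ℝ) - α ≠ 0 := by intro h; linarith
        rw [← hmul]; field_simp
      have e2 : r ^ (-α-1) ≤ r ^ (-α) :=
        Real.rpow_le_rpow_of_exponent_le hr1' (by linarith)
      have e3 : r ^ (-(2*α)) ≤ r ^ (-α) :=
        Real.rpow_le_rpow_of_exponent_le hr1' (by linarith)
      have e4 : r ^ (-α) = 2 ^ α * t ^ (-α) := by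
        rw [hr_def, Real.div_rpow ht.le (by norm_num),
          Real.rpow_neg (by norm_num : (0:ℝ) ≤ 2)]
        field_simp
      have e5 : hfun α t = t ^ (-α) := by
        apply min_eq_left
        apply Real.rpow_le_one_of_one_le_of_nonpos _ (by linarith)
        simp only [hr_def] at hr1'; linarith
      have h1α : 0 < 1 - α := by linarith
      calc (∫ s in (0:ℝ)..r, gfun α (t - s) * hfun α s)
          ≤ r ^ (-α-1) + r ^ (-(2*α)) / (1-α) := by
            rw [← e1]; exact le_trans step1 prod
        _ ≤ r ^ (-α) + r ^ (-α) / (1-α) := by gcongr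
        _ = (1 + 1/(1-α)) * r ^ (-α) := by field_simp
        _ = (1 + 1/(1-α)) * 2 ^ α * hfun α t := by rw [e5, e4]; ring
  linarith


/-- Decay estimate for the fractional resolvent on a Jordan block of size `n+1`.
`F t` plays the role of `E_α(λ t^α)` and `G t` of `t^{α-1} E_{α,α}(λ t^α)`. -/
theorem jordan_block_decay (α : ℝ) (hα : α ∈ Set.Ioo (0:ℝ) 1) (lam : ℂ)
    (harg : α * π / 2 < |Complex.arg lam|)
    (F G : ℝ → ℂ) (m : ℝ) (hm : 0 < m)
    (hF : ∀ t : ℝ, 0 < t → ‖F t‖ ≤ m * min (t ^ (-α)) 1)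
    (hG : ∀ t : ℝ, 0 < t → ‖G t‖ ≤ m * min (t ^ (-α - 1)) (t ^ (α - 1)))
    (n : ℕ) (u₀ : Fin (n + 1) → ℂ) (u : Fin (n + 1) → ℝ → ℂ)
    (hlast : ∀ t : ℝ, u (Fin.last n) t = F t * u₀ (Fin.last n))
    (hrec : ∀ i : Fin (n + 1), (i : ℕ) < n → ∀ t : ℝ, 0 < t →
      u i t = F t * u₀ i + ∫ s in (0:ℝ)..t, G (t - s) * u (i + 1) s) :
    ∃ C : ℝ, 0 < C ∧ ∀ t : ℝ, 0 < t → ∀ i : Fin (n + 1),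
      ‖u i t‖ ≤ C * (⨆ j : Fin (n + 1), ‖u₀ j‖) * min (t ^ (-α)) 1 := by
  obtain ⟨h0, h1⟩ := hα
  set M : ℝ := ⨆ j : Fin (n + 1), ‖u₀ j‖ with hM_def
  have hM : ∀ j, ‖u₀ j‖ ≤ M :=
    fun j => le_ciSup (f := fun j => ‖u₀ j‖) (Set.Finite.bddAbove (Set.finite_range _)) j
  have hM0 : 0 ≤ M := le_trans (norm_nonneg _) (hM 0)
  set K : ℝ := (1 + 1/(1-α)) * 2 ^ α + 2/α * 2 ^ α with hK_def
  have hK0 : 0 < K := by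
    have h1a : 0 < 1 - α := by linarith
    have : (0:ℝ) < 2 ^ α := Real.rpow_pos_of_pos (by norm_num) α
    have : 0 < 1/(1-α) := by positivity
    have : 0 < 2/α := by positivity
    rw [hK_def]
    have h2 : (0:ℝ) < 2 ^ α := Real.rpow_pos_of_pos (by norm_num) α
    have h3 : (0:ℝ) < 1/(1-α) := by positivity
    nlinarith [mul_pos (show (0:ℝ) < 1 + 1/(1-α) by linarith) h2,
      mul_pos (show (0:ℝ) < 2/α by positivity) h2]
  have key : ∀ k : ℕ, ∃ C : ℝ, 0 < C ∧ ∀ i : Fin (n+1), n ≤ (i:ℕ) + k →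
      ∀ t : ℝ, 0 < t → ‖u i t‖ ≤ C * M * hfun α t := by
    intro k
    induction k with
    | zero =>
      refine ⟨m, hm, fun i hi t ht => ?_⟩
      have hieq : i = Fin.last n := by
        apply Fin.ext
        simp only [Fin.val_last]
        omega
      rw [hieq, hlast t, norm_mul]
      calc ‖F t‖ * ‖u₀ (Fin.last n)‖
          ≤ (m * hfun α t) * M :=
            mul_le_mul (hF t ht) (hM _) (norm_nonneg _)
              (by have := hfun_nonneg α ht.le; positivity)
        _ = m * M * hfun α t := by ring
    | succ k ih =>
      obtain ⟨C, hC0, hC⟩ := ih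
      refine ⟨C + m * (1 + C * K), by positivity, fun i hi t ht => ?_⟩
      have hCle : C ≤ C + m * (1 + C * K) := by
        nlinarith [mul_pos hC0 hK0, mul_pos hm (mul_pos hC0 hK0)]
      rcases le_or_gt n ((i:ℕ) + k) with hik | hik
      · calc ‖u i t‖ ≤ C * M * hfun α t := hC i hik t ht
          _ ≤ (C + m * (1 + C * K)) * M * hfun α t := by
              have := hfun_nonneg α ht.le
              exact mul_le_mul_of_nonneg_right
                (mul_le_mul_of_nonneg_right hCle hM0) this
      · -- i < n
        have hiln : (i:ℕ) < n := by omega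
        have hip1 : ((i + 1 : Fin (n+1)) : ℕ) = (i:ℕ) + 1 := by
          apply Fin.val_add_one_of_lt
          rw [Fin.lt_iff_val_lt_val, Fin.val_last]; exact hiln
        have hnext : ∀ s : ℝ, 0 < s →
            ‖u (i + 1) s‖ ≤ C * M * hfun α s := by
          intro s hs
          apply hC (i+1) _ s hs
          omega
        rw [hrec i hiln t ht]
        have hIbound : ‖∫ s in (0:ℝ)..t, G (t - s) * u (i + 1) s‖
            ≤ m * (C * M) * (K * hfun α t) := by
          have hRHS_nonneg : 0 ≤ m * (C * M) * (K * hfun α t) := by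
            have := hfun_nonneg α ht.le; positivity
          by_cases hInt : IntervalIntegrable (fun s => G (t - s) * u (i + 1) s)
              volume 0 t
          · have bnd_int : IntervalIntegrable
                (fun s => m * (C * M) * (gfun α (t - s) * hfun α s)) volume 0 t :=
              (ghfun_intble α h0 ht.le).const_mul _
            have step : (∫ s in (0:ℝ)..t, ‖G (t - s) * u (i + 1) s‖)
                ≤ ∫ s in (0:ℝ)..t, m * (C * M) * (gfun α (t - s) * hfun α s) := by
              apply intervalIntegral.integral_mono_ae_restrict ht.le hInt.norm bnd_int
              have hmem := ae_restrict_mem (μ := volume) (s := Set.Icc (0:ℝ) t)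
                measurableSet_Icc
              have hne : ∀ᵐ s ∂(volume.restrict (Set.Icc (0:ℝ) t)),
                  s ∉ ({0, t} : Set ℝ) := by
                apply ae_restrict_of_ae
                exact measure_eq_zero_iff_ae_notMem.mp
                  ((Set.finite_singleton t |>.insert 0).measure_zero volume)
              filter_upwards [hmem, hne] with s hs hs'
              simp only [Set.mem_insert_iff, Set.mem_singleton_iff, not_or] at hs'
              have hs0 : 0 < s := lt_of_le_of_ne hs.1 (Ne.symm hs'.1)
              have hst : 0 < t - s := by
                rcases lt_or_eq_of_le hs.2 with h | h
                · linarith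
                · exact absurd h hs'.2
              rw [norm_mul]
              calc ‖G (t - s)‖ * ‖u (i+1) s‖
                  ≤ (m * gfun α (t - s)) * (C * M * hfun α s) :=
                    mul_le_mul (hG (t-s) hst) (hnext s hs0) (norm_nonneg _)
                      (by have := gfun_nonneg α hst.le; positivity)
                _ = m * (C * M) * (gfun α (t - s) * hfun α s) := by ring
            calc ‖∫ s in (0:ℝ)..t, G (t - s) * u (i + 1) s‖
                = ‖∫ s in (0:ℝ)..t, G (t - s) * u (i + 1) s‖ :=
                  rfl
              _ ≤ ∫ s in (0:ℝ)..t, ‖G (t - s) * u (i + 1) s‖ :=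
                  intervalIntegral.norm_integral_le_integral_norm ht.le
              _ ≤ ∫ s in (0:ℝ)..t, m * (C * M) * (gfun α (t - s) * hfun α s) := step
              _ = m * (C * M) * ∫ s in (0:ℝ)..t, gfun α (t - s) * hfun α s := by
                  rw [intervalIntegral.integral_const_mul]
              _ ≤ m * (C * M) * (K * hfun α t) := by
                  apply mul_le_mul_of_nonneg_left (conv_bound α h0 h1 ht)
                  positivity
          · rw [intervalIntegral.integral_undef hInt]
            simpa using hRHS_nonneg
        calc ‖F t * u₀ i + ∫ s in (0:ℝ)..t, G (t - s) * u (i + 1) s‖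
            ≤ ‖F t * u₀ i‖
              + ‖∫ s in (0:ℝ)..t, G (t - s) * u (i + 1) s‖ :=
              norm_add_le _ _
          _ ≤ (m * hfun α t) * M + m * (C * M) * (K * hfun α t) := by
              rw [norm_mul]
              refine add_le_add (mul_le_mul (hF t ht) (hM i) (norm_nonneg _)
                (by have := hfun_nonneg α ht.le; positivity)) hIbound
          _ = (m * (1 + C * K)) * M * hfun α t := by ring
          _ ≤ (C + m * (1 + C * K)) * M * hfun α t := by
              have := hfun_nonneg α ht.le
              exact mul_le_mul_of_nonneg_right
                (mul_le_mul_of_nonneg_right (by linarith) hM0) this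

  obtain ⟨C, hC0, hC⟩ := key n
  exact ⟨C, hC0, fun t ht i => hC i (by omega) t ht⟩
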